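/- (Sublinear rate for gradient mapping) Let f be convex, differentiable, L-smooth, g convex, F = f + g, with F bounded below and attaining minimum F*. Consider iterates x^{k+1} = prox_{g,U^k}(x^k − (U^k)⁻¹∇f(x^k)) where each U^k is symmetric with U^k ⪰ L·I, and define G_{U^k}(x^k) = U^k(x^k − x^{k+1}). Then for any K ≥ 1: min_{k=0,…,K−1} ‖G_{U^k}(x^k)‖²_{(U^k)⁻¹} ≤ 2(F(x⁰) − F*)/K. -/

import Mathlib

noncomputable section

/-- Euclidean dot product on `Fin n → ℝ`. -/
def dot {n : ℕ} (a b : Fin n → ℝ) : ℝ := ∑ i, a i * b i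

/-- Squared Euclidean norm. -/
def sqnorm {n : ℕ} (a : Fin n → ℝ) : ℝ := dot a a

open Matrix

section helpers

variable {n : ℕ}

lemma dot_eq (a b : Fin n → ℝ) : dot a b = a ⬝ᵥ b := rfl

lemma dot_comm (a b : Fin n → ℝ) : dot a b = dot b a := by
  rw [dot_eq, dot_eq, dotProduct_comm]

lemma sqnorm_nonneg (a : Fin n → ℝ) : 0 ≤ sqnorm a := by
  unfold sqnorm dot
  exact Finset.sum_nonneg fun i _ => mul_self_nonneg _

lemma dot_le_sqrt (a b : Fin n → ℝ) :
    dot a b ≤ Real.sqrt (sqnorm a) * Real.sqrt (sqnorm b) := by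
  have := Real.sum_mul_le_sqrt_mul_sqrt Finset.univ a b
  simpa [dot, sqnorm, sq] using this

lemma dot_mulVec_symm (U : Matrix (Fin n) (Fin n) ℝ) (hU : U.IsSymm) (a b : Fin n → ℝ) :
    dot a (U.mulVec b) = dot b (U.mulVec a) := by
  rw [dot_eq, dot_eq, Matrix.dotProduct_mulVec, ← Matrix.mulVec_transpose, hU.eq,
    dotProduct_comm]

lemma sqnorm_smul (t : ℝ) (v : Fin n → ℝ) : sqnorm (t • v) = t ^ 2 * sqnorm v := by
  simp only [sqnorm, dot_eq, smul_dotProduct, dotProduct_smul, smul_eq_mul]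
  ring

lemma sqnorm_neg (v : Fin n → ℝ) : sqnorm (-v) = sqnorm v := by
  simp [sqnorm, dot_eq]

/-- The descent lemma for L-smooth functions. -/
lemma descent_lemma (f : (Fin n → ℝ) → ℝ) (f' : (Fin n → ℝ) → (Fin n → ℝ)) (L : ℝ)
    (hL : 0 < L)
    (hdiff : ∀ x v, HasDerivAt (fun t : ℝ => f (x + t • v)) (dot (f' x) v) 0)
    (hsmooth : ∀ x y, Real.sqrt (sqnorm (f' x - f' y)) ≤ L * Real.sqrt (sqnorm (x - y)))
    (x v : Fin n → ℝ) :
    f (x + v) ≤ f x + dot (f' x) v + L / 2 * sqnorm v := by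
  set ψ : ℝ → ℝ := fun t => f (x + t • v) - dot (f' x) v * t - (L / 2 * sqnorm v) * t ^ 2 with hψdef
  have hφ : ∀ t₀ : ℝ, HasDerivAt (fun t : ℝ => f (x + t • v)) (dot (f' (x + t₀ • v)) v) t₀ := by
    intro t₀
    have hinner : HasDerivAt (fun t : ℝ => t - t₀) 1 t₀ := by
      simpa using (hasDerivAt_id t₀).sub_const t₀
    have h : HasDerivAt ((fun s : ℝ => f (x + t₀ • v + s • v)) ∘ (fun t : ℝ => t - t₀))
        (dot (f' (x + t₀ • v)) v * 1) t₀ :=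
      HasDerivAt.comp t₀ (by simpa using hdiff (x + t₀ • v) v) hinner
    rw [mul_one] at h
    convert h using 1
    funext t
    show f (x + t • v) = f (x + t₀ • v + (t - t₀) • v)
    congr 1
    module
  have hψ : ∀ t₀ : ℝ, HasDerivAt ψ
      (dot (f' (x + t₀ • v)) v - dot (f' x) v - L * sqnorm v * t₀) t₀ := by
    intro t₀
    have h1 : HasDerivAt (fun t : ℝ => dot (f' x) v * t) (dot (f' x) v) t₀ := by
      simpa using (hasDerivAt_id t₀).const_mul (dot (f' x) v)
    have h2 : HasDerivAt (fun t : ℝ => (L / 2 * sqnorm v) * t ^ 2)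
        ((L / 2 * sqnorm v) * (2 * t₀)) t₀ := by
      simpa using (hasDerivAt_pow 2 t₀).const_mul (L / 2 * sqnorm v)
    have := ((hφ t₀).sub h1).sub h2
    exact this.congr_deriv (by ring)
  have hanti : AntitoneOn ψ (Set.Icc 0 1) := by
    apply antitoneOn_of_deriv_nonpos (convex_Icc 0 1)
    · exact fun t _ => ((hψ t).continuousAt).continuousWithinAt
    · exact fun t _ => ((hψ t).differentiableAt).differentiableWithinAt
    · intro t ht
      rw [interior_Icc] at ht
      rw [(hψ t).deriv]
      have hdp : dot (f' (x + t • v)) v - dot (f' x) v = dot (f' (x + t • v) - f' x) v := by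
        simp [dot_eq, sub_dotProduct]
      have hcs := dot_le_sqrt (f' (x + t • v) - f' x) v
      have hsm := hsmooth (x + t • v) x
      have hsub : x + t • v - x = t • v := by abel
      rw [hsub, sqnorm_smul] at hsm
      have hsq : Real.sqrt (t ^ 2 * sqnorm v) = t * Real.sqrt (sqnorm v) := by
        rw [Real.sqrt_mul (sq_nonneg t), Real.sqrt_sq ht.1.le]
      rw [hsq] at hsm
      have hmul : Real.sqrt (sqnorm v) * Real.sqrt (sqnorm v) = sqnorm v :=
        Real.mul_self_sqrt (sqnorm_nonneg v)
      have hsqrtv : 0 ≤ Real.sqrt (sqnorm v) := Real.sqrt_nonneg _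
      have : dot (f' (x + t • v) - f' x) v ≤ L * t * sqnorm v := by
        calc dot (f' (x + t • v) - f' x) v
            ≤ Real.sqrt (sqnorm (f' (x + t • v) - f' x)) * Real.sqrt (sqnorm v) := hcs
          _ ≤ (L * (t * Real.sqrt (sqnorm v))) * Real.sqrt (sqnorm v) := by
              apply mul_le_mul_of_nonneg_right hsm hsqrtv
          _ = L * t * sqnorm v := by
              rw [show L * (t * Real.sqrt (sqnorm v)) * Real.sqrt (sqnorm v)
                = L * t * (Real.sqrt (sqnorm v) * Real.sqrt (sqnorm v)) by ring, hmul]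
      rw [hdp]
      nlinarith
  have h01 := hanti (Set.left_mem_Icc.2 zero_le_one) (Set.right_mem_Icc.2 zero_le_one) zero_le_one
  have h0 : ψ 0 = f x := by simp [hψdef]
  have h1 : ψ 1 = f (x + v) - dot (f' x) v - L / 2 * sqnorm v := by simp [hψdef]
  rw [h0, h1] at h01
  linarith

end helpers

theorem sublinear_rate_gradient_mapping {n : ℕ} (f g : (Fin n → ℝ) → ℝ)
    (f' : (Fin n → ℝ) → (Fin n → ℝ)) (L : ℝ) (hL : 0 < L)
    (hfconv : ConvexOn ℝ Set.univ f) (hgconv : ConvexOn ℝ Set.univ g)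
    (hdiff : ∀ x v, HasDerivAt (fun t : ℝ => f (x + t • v)) (dot (f' x) v) 0)
    (hsmooth : ∀ x y, Real.sqrt (sqnorm (f' x - f' y)) ≤ L * Real.sqrt (sqnorm (x - y)))
    (Fstar : ℝ) (hFstar : ∀ z, Fstar ≤ f z + g z)
    (hattain : ∃ xstar, f xstar + g xstar = Fstar)
    (xs : ℕ → (Fin n → ℝ)) (Us : ℕ → Matrix (Fin n) (Fin n) ℝ)
    (hUsymm : ∀ k, (Us k).IsSymm)
    (hUL : ∀ k, (Us k - L • (1 : Matrix (Fin n) (Fin n) ℝ)).PosSemidef)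
    (hiter : ∀ k, IsMinOn (fun v => g v + (1 / 2) *
        dot ((xs k - (Us k)⁻¹.mulVec (f' (xs k))) - v)
            ((Us k).mulVec ((xs k - (Us k)⁻¹.mulVec (f' (xs k))) - v)))
      Set.univ (xs (k + 1))) :
    ∀ K : ℕ, 1 ≤ K → ∃ k < K,
      dot ((Us k).mulVec (xs k - xs (k + 1)))
          ((Us k)⁻¹.mulVec ((Us k).mulVec (xs k - xs (k + 1))))
        ≤ 2 * (f (xs 0) + g (xs 0) - Fstar) / K := by
  -- positive definiteness of each Us k
  have hpd : ∀ k, (Us k).PosDef := by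
    intro k
    rw [Matrix.posDef_iff_dotProduct_mulVec]
    constructor
    · rw [Matrix.IsHermitian]
      simpa [Matrix.conjTranspose, Matrix.transpose, Matrix.map] using (hUsymm k).eq
    · intro y hy
      have h1 := (hUL k).dotProduct_mulVec_nonneg y
      have h2 : 0 < y ⬝ᵥ y := by
        rcases Function.ne_iff.1 hy with ⟨i, hi⟩
        have : 0 < y i * y i := by
          have hi' : y i ≠ 0 := by simpa using hi
          exact mul_self_pos.2 hi'
        have hterm : ∀ j ∈ Finset.univ, 0 ≤ y j * y j := fun j _ => mul_self_nonneg _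
        exact Finset.sum_pos' hterm ⟨i, Finset.mem_univ i, this⟩
      simp only [star_trivial, sub_mulVec, dotProduct_sub, smul_mulVec, one_mulVec,
        dotProduct_smul, smul_eq_mul] at h1 ⊢
      nlinarith
  have hUdet : ∀ k, IsUnit (Us k).det := fun k => (hpd k).det_pos.ne'.isUnit
  have hUinvU : ∀ k, (Us k)⁻¹ * Us k = 1 := fun k => Matrix.nonsing_inv_mul _ (hUdet k)
  have hUUinv : ∀ k, Us k * (Us k)⁻¹ = 1 := fun k => Matrix.mul_nonsing_inv _ (hUdet k)
  -- abbreviation for the per-step quadratic quantity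
  set c : ℕ → ℝ := fun k => dot (xs k - xs (k + 1)) ((Us k).mulVec (xs k - xs (k + 1))) with hc
  have hcnonneg : ∀ k, L * sqnorm (xs k - xs (k + 1)) ≤ c k := by
    intro k
    set d : Fin n → ℝ := xs k - xs (k + 1) with hddef
    have h1 := (hUL k).dotProduct_mulVec_nonneg d
    simp only [star_trivial, sub_mulVec, dotProduct_sub, smul_mulVec, one_mulVec,
      dotProduct_smul, smul_eq_mul] at h1
    simp only [hc, dot_eq, sqnorm]
    linarith [h1]
  have hcpos : ∀ k, 0 ≤ c k := by
    intro k
    have := hcnonneg k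
    nlinarith [sqnorm_nonneg (xs k - xs (k + 1)), hL]
  -- key: sufficient decrease
  have key : ∀ k, f (xs (k + 1)) + g (xs (k + 1)) + (1 / 2) * c k ≤ f (xs k) + g (xs k) := by
    intro k
    set U := Us k with hU
    set x := xs k with hx
    set xp := xs (k + 1) with hxp
    set d : Fin n → ℝ := x - xp with hd
    set w : Fin n → ℝ := (x - U⁻¹.mulVec (f' x)) - xp with hw
    have hck : c k = dot d (U.mulVec d) := rfl
    -- step 1: smoothness bound for f
    have hf : f xp ≤ f x + dot (f' x) (xp - x) + L / 2 * sqnorm (xp - x) := by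
      have := descent_lemma f f' L hL hdiff hsmooth x (xp - x)
      rwa [add_sub_cancel] at this
    -- step 2: the prox inequality for g
    have hB : dot d (U.mulVec w) ≤ g x - g xp := by
      have hstep : ∀ t : ℝ, 0 < t → t ≤ 1 →
          dot d (U.mulVec w) ≤ g x - g xp + t / 2 * dot d (U.mulVec d) := by
        intro t ht0 ht1
        have hmem := hiter k (Set.mem_univ (xp + t • d))
        simp only [Set.mem_setOf_eq] at hmem
        have hquad : dot ((x - U⁻¹.mulVec (f' x)) - (xp + t • d))
            (U.mulVec ((x - U⁻¹.mulVec (f' x)) - (xp + t • d)))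
            = dot w (U.mulVec w) - 2 * t * dot d (U.mulVec w)
              + t ^ 2 * dot d (U.mulVec d) := by
          have heq : (x - U⁻¹.mulVec (f' x)) - (xp + t • d) = w - t • d := by
            simp only [hw]; abel
          rw [heq]
          have hsymm := dot_mulVec_symm U (hUsymm k)
          simp only [dot_eq, Matrix.mulVec_sub, Matrix.mulVec_smul, dotProduct_sub,
            sub_dotProduct, smul_dotProduct, dotProduct_smul, smul_eq_mul]
          have hswap : w ⬝ᵥ U.mulVec d = d ⬝ᵥ U.mulVec w := by
            have := hsymm w d
            simpa [dot_eq] using this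
          rw [hswap]
          ring
        have hconv : g (xp + t • d) ≤ (1 - t) * g xp + t * g x := by
          have h := hgconv.2 (Set.mem_univ xp) (Set.mem_univ x)
            (by linarith : (0:ℝ) ≤ 1 - t) ht0.le (by ring)
          have heq : (1 - t) • xp + t • x = xp + t • d := by
            simp only [hd]; module
          rwa [heq] at h
        rw [hquad] at hmem
        have hgoal : t * dot d (U.mulVec w)
            ≤ t * (g x - g xp + t / 2 * dot d (U.mulVec d)) := by
          nlinarith [hmem, hconv]
        exact le_of_mul_le_mul_left hgoal ht0
      -- take t → 0
      apply le_of_forall_pos_le_add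
      intro ε hε
      have hC0 : 0 ≤ dot d (U.mulVec d) := by rw [← hck]; exact hcpos k
      have hCpos : (0:ℝ) < dot d (U.mulVec d) / 2 + 1 := by linarith
      set t : ℝ := min 1 (ε / (dot d (U.mulVec d) / 2 + 1)) with htdef
      have ht0 : 0 < t := lt_min one_pos (div_pos hε hCpos)
      have ht1 : t ≤ 1 := min_le_left _ _
      have hstep' := hstep t ht0 ht1
      have htc : t / 2 * dot d (U.mulVec d) ≤ ε := by
        have h1 : t ≤ ε / (dot d (U.mulVec d) / 2 + 1) := min_le_right _ _
        have h2 : t * (dot d (U.mulVec d) / 2 + 1) ≤ ε := by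
          rw [← le_div_iff₀ hCpos]; exact h1
        nlinarith [ht0.le]
      linarith
    -- step 3: simplify U.mulVec w
    have hUw : U.mulVec w = U.mulVec d - f' x := by
      have : w = d - U⁻¹.mulVec (f' x) := by simp only [hw, hd]; abel
      rw [this, Matrix.mulVec_sub, Matrix.mulVec_mulVec, hUUinv k, Matrix.one_mulVec]
    have hBd : dot d (U.mulVec w) = dot d (U.mulVec d) - dot d (f' x) := by
      rw [hUw]
      simp [dot_eq, dotProduct_sub]
    -- step 4: combine
    have hdotneg : dot (f' x) (xp - x) = - dot d (f' x) := by
      have : xp - x = -d := by simp only [hd]; abel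
      rw [this, dot_comm]
      simp [dot_eq, neg_dotProduct]
    have hsq : sqnorm (xp - x) = sqnorm d := by
      have : xp - x = -d := by simp only [hd]; abel
      rw [this, sqnorm_neg]
    rw [hBd] at hB
    rw [hdotneg, hsq] at hf
    have hLC := hcnonneg k
    -- f xp ≤ f x - dot d (f' x) + L/2 sqnorm d ; g xp ≤ g x - c k + dot d (f' x)
    -- so F xp ≤ F x - c k + L/2 sqnorm d ≤ F x - c k / 2
    linarith [hck, hcnonneg k, hf, hB]
  -- telescoping sum
  have hsum : ∀ K : ℕ, f (xs K) + g (xs K) + ∑ k ∈ Finset.range K, (1 / 2) * c k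
      ≤ f (xs 0) + g (xs 0) := by
    intro K
    induction K with
    | zero => simp
    | succ K ih =>
      rw [Finset.sum_range_succ]
      have := key K
      linarith
  intro K hK
  have hKpos : (0:ℝ) < K := by exact_mod_cast hK
  -- choose minimizing k
  obtain ⟨k, hkmem, hkmin⟩ := Finset.exists_min_image (Finset.range K) c
    ⟨0, Finset.mem_range.2 hK⟩
  refine ⟨k, Finset.mem_range.1 hkmem, ?_⟩
  -- rewrite goal as c k
  have hgoal_eq : dot ((Us k).mulVec (xs k - xs (k + 1)))
      ((Us k)⁻¹.mulVec ((Us k).mulVec (xs k - xs (k + 1)))) = c k := by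
    rw [Matrix.mulVec_mulVec, hUinvU k, Matrix.one_mulVec, dot_comm]
  rw [hgoal_eq]
  -- K * c k ≤ ∑ c ≤ 2 (F0 - F*)
  have hKc : (K : ℝ) * c k ≤ ∑ j ∈ Finset.range K, c j := by
    have := Finset.card_nsmul_le_sum (Finset.range K) c (c k) (fun j hj => hkmin j hj)
    simpa [Finset.card_range, nsmul_eq_mul] using this
  have hsum2 : ∑ j ∈ Finset.range K, c j ≤ 2 * (f (xs 0) + g (xs 0) - Fstar) := by
    have h1 := hsum K
    have h2 := hFstar (xs K)
    have h3 : ∑ j ∈ Finset.range K, (1 / 2) * c j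
        = (1 / 2) * ∑ j ∈ Finset.range K, c j := by rw [Finset.mul_sum]
    rw [h3] at h1
    linarith
  rw [le_div_iff₀ hKpos]
  calc c k * K = K * c k := by ring
    _ ≤ ∑ j ∈ Finset.range K, c j := hKc
    _ ≤ 2 * (f (xs 0) + g (xs 0) - Fstar) := hsum2
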